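/- Let π : P → B be a Riemannian submersion with B compact of dimension n. Then for every C¹ section s : B → P, the Riemannian volume of s(B) is at least the Riemannian volume of B: vol(s(B)) ≥ vol(B). -/

import Mathlib

open Module MeasureTheory

lemma key_det {E F : Type*} [NormedAddCommGroup E] [InnerProductSpace ℝ E]
    [FiniteDimensional ℝ E] [NormedAddCommGroup F] [InnerProductSpace ℝ F]
    [FiniteDimensional ℝ F] (T : E →ₗ[ℝ] F) (h : ∀ w, ‖w‖ ≤ ‖T w‖) :
    1 ≤ LinearMap.det (LinearMap.adjoint T ∘ₗ T) := by
  set A := LinearMap.adjoint T ∘ₗ T with hA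
  have hsym : LinearMap.IsSymmetric A := by
    intro x y
    simp only [hA, LinearMap.comp_apply, LinearMap.adjoint_inner_left,
      LinearMap.adjoint_inner_right]
  have hn : finrank ℝ E = finrank ℝ E := rfl
  have hb := hsym.eigenvectorBasis hn
  have happ := hsym.apply_eigenvectorBasis hn
  -- matrix of A in eigenvector basis is diagonal
  have hmat : LinearMap.toMatrix (hsym.eigenvectorBasis hn).toBasis
      (hsym.eigenvectorBasis hn).toBasis A
      = Matrix.diagonal (hsym.eigenvalues hn) := by
    ext i j
    rw [LinearMap.toMatrix_apply, OrthonormalBasis.coe_toBasis]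
    rw [show A (hsym.eigenvectorBasis hn j) = (hsym.eigenvalues hn j : ℝ) • hsym.eigenvectorBasis hn j from happ j]
    simp [Matrix.diagonal, Basis.repr_self, Finsupp.single_apply, eq_comm]
    split_ifs with hij <;> simp [hij]
  have hdet : LinearMap.det A = ∏ i, hsym.eigenvalues hn i := by
    rw [← LinearMap.det_toMatrix (hsym.eigenvectorBasis hn).toBasis, hmat,
      Matrix.det_diagonal]
  rw [hdet]
  have h1' : (1:ℝ) = ∏ _i : Fin (finrank ℝ E), (1:ℝ) := by simp
  rw [h1']
  apply Finset.prod_le_prod (fun _ _ => zero_le_one)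
  intro i _
  have hv := hsym.apply_eigenvectorBasis hn i
  set v := hsym.eigenvectorBasis hn i with hvdef
  have hnv : ‖v‖ = 1 := (hsym.eigenvectorBasis hn).orthonormal.1 i
  have h1 : (inner ℝ (A v) v : ℝ) = hsym.eigenvalues hn i := by
    rw [hv, real_inner_smul_left, real_inner_self_eq_norm_sq, hnv]; norm_num
  have h2 : (inner ℝ (A v) v : ℝ) = ‖T v‖ ^ 2 := by
    simp only [hA, LinearMap.comp_apply, LinearMap.adjoint_inner_left]
    rw [real_inner_self_eq_norm_sq]
  have : (1:ℝ) ≤ ‖T v‖ ^ 2 := by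
    have := h v
    nlinarith [norm_nonneg (T v)]
  linarith [h1 ▸ h2 ▸ this]

lemma key_norm {E F : Type*} [NormedAddCommGroup E] [InnerProductSpace ℝ E]
    [FiniteDimensional ℝ E] [NormedAddCommGroup F] [InnerProductSpace ℝ F]
    [FiniteDimensional ℝ F] (p : F →ₗ[ℝ] E) (s : E →ₗ[ℝ] F)
    (hiso : ∀ v ∈ (LinearMap.ker p)ᗮ, ∀ w ∈ (LinearMap.ker p)ᗮ,
      inner ℝ (p v) (p w) = (inner ℝ v w : ℝ))
    (hsec : p ∘ₗ s = LinearMap.id) (w : E) : ‖w‖ ≤ ‖s w‖ := by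
  set K := LinearMap.ker p with hK
  set v : F := (Kᗮ.orthogonalProjectionOnto (s w) : F) with hv
  have hvmem : v ∈ Kᗮ := (Kᗮ.orthogonalProjectionOnto (s w)).2
  have hdiff : s w - v ∈ K := by
    have h := Submodule.sub_starProjection_mem_orthogonal (K := Kᗮ) (s w)
    rwa [Submodule.orthogonal_orthogonal] at h
  have hpv : p v = w := by
    have h1 : p (s w) = w := by
      have := congrArg (fun f => f w) hsec; simpa using this
    have h2 : p (s w) - p v = 0 := by rw [← map_sub]; exact hdiff
    rw [h1, sub_eq_zero] at h2
    exact h2.symm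
  have hnormv : ‖w‖ = ‖v‖ := by
    have := hiso v hvmem v hvmem
    rw [hpv, real_inner_self_eq_norm_sq, real_inner_self_eq_norm_sq] at this
    nlinarith [norm_nonneg w, norm_nonneg v]
  rw [hnormv, hv]
  calc ‖(Kᗮ.orthogonalProjectionOnto (s w) : F)‖
      ≤ ‖Kᗮ.orthogonalProjectionOnto‖ * ‖s w‖ := by
        rw [Submodule.norm_coe]
        exact (Kᗮ.orthogonalProjectionOnto).le_opNorm (s w)
  _ ≤ 1 * ‖s w‖ := by
        gcongr; exacts [Submodule.orthogonalProjectionOnto_norm_le _]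
  _ = ‖s w‖ := one_mul _

/-- Let `π : P → B` be a Riemannian submersion with `B` compact. Then for
every `C¹` section `s : B → P`, `vol(s(B)) ≥ vol(B)`.

We encode the data pointwise: `TB b ≅ T_bB` and `TP b ≅ T_{s(b)}P` are the tangent spaces
(finite-dimensional real inner product spaces), `dπ b` is the differential of `π` at `s b`
(surjective and isometric on the orthogonal complement of its kernel: a Riemannian
submersion), `ds b` the differential of the section (`dπ ∘ ds = id`), `μ` the Riemannian
volume measure of `B` (finite, by compactness), and
`J b = √det((ds_b)* ∘ ds_b)` the Riemannian jacobian of `ds`, so that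
`vol(s(B)) = ∫_B J dμ ≥ μ(B) = vol(B)`. -/
theorem stmt_9 {n : ℕ} {B : Type*} [MeasurableSpace B]
    (μ : Measure B) [IsFiniteMeasure μ]
    (TB : B → Type*) [∀ b, NormedAddCommGroup (TB b)] [∀ b, InnerProductSpace ℝ (TB b)]
    [∀ b, FiniteDimensional ℝ (TB b)]
    (TP : B → Type*) [∀ b, NormedAddCommGroup (TP b)] [∀ b, InnerProductSpace ℝ (TP b)]
    [∀ b, FiniteDimensional ℝ (TP b)]
    (hTB : ∀ b, finrank ℝ (TB b) = n)
    (dπ : ∀ b, TP b →ₗ[ℝ] TB b) (ds : ∀ b, TB b →ₗ[ℝ] TP b)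
    -- `π` is a Riemannian submersion
    (hsurj : ∀ b, Function.Surjective (dπ b))
    (hiso : ∀ b, ∀ v ∈ (LinearMap.ker (dπ b))ᗮ, ∀ w ∈ (LinearMap.ker (dπ b))ᗮ,
      inner ℝ (dπ b v) (dπ b w) = (inner ℝ v w : ℝ))
    -- `s` is a section of `π`
    (hsec : ∀ b, dπ b ∘ₗ ds b = LinearMap.id)
    -- the Riemannian jacobian of `ds`
    (J : B → ℝ)
    (hJ : ∀ b, J b = Real.sqrt (LinearMap.det ((LinearMap.adjoint (ds b)) ∘ₗ ds b)))
    (hJint : Integrable J μ) :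
    ∫ b, J b ∂μ ≥ (μ Set.univ).toReal := by
  have hJ1 : ∀ b, 1 ≤ J b := by
    intro b
    rw [hJ b]
    have hnorm : ∀ w, ‖w‖ ≤ ‖ds b w‖ := key_norm (dπ b) (ds b) (hiso b) (hsec b)
    have hdet : 1 ≤ LinearMap.det (LinearMap.adjoint (ds b) ∘ₗ ds b) :=
      key_det (ds b) hnorm
    calc (1:ℝ) = Real.sqrt 1 := Real.sqrt_one.symm
    _ ≤ _ := Real.sqrt_le_sqrt hdet
  calc (μ Set.univ).toReal = ∫ _b, (1:ℝ) ∂μ := by simp; rfl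
  _ ≤ ∫ b, J b ∂μ := integral_mono (integrable_const 1) hJint hJ1
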